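/- In the Malcev–Neumann ring K*_< G over a division ring K and bi-ordered group (G,<), any series of the form 1 - x, where x has well-ordered support contained in {g ∈ G : g > 1}, is invertible, with inverse the sum Σ_{n≥0} x^n. -/

import Mathlib

/-- The Malcev–Neumann set: formal series over `K` indexed by `G` with
well-ordered support. -/
abbrev MNSeries (K G : Type*) [Zero K] [LinearOrder G] :=
  {f : G → K // (Function.support f).IsWF}

section Aux

variable {G : Type*} [Group G] [LinearOrder G]
  [CovariantClass G G (· * ·) (· < ·)]
  [CovariantClass G G (Function.swap (· * ·)) (· < ·)]

/-- For well-ordered sets `S`, `T` in a bi-ordered group, the set of `s ∈ S` with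
`s⁻¹ * g ∈ T` is finite. -/
private theorem MN_aux_finite {S T : Set G} (hS : S.IsWF) (hT : T.IsWF) (g : G) :
    {s | s ∈ S ∧ s⁻¹ * g ∈ T}.Finite := by
  rw [← Set.not_infinite]
  intro hinf
  have hApwo : {s | s ∈ S ∧ s⁻¹ * g ∈ T}.IsPWO := (hS.mono fun s hs => hs.1).isPWO
  let f : ℕ ↪ {s | s ∈ S ∧ s⁻¹ * g ∈ T} := Set.Infinite.natEmbedding _ hinf
  obtain ⟨φ, hφ⟩ := hApwo.exists_monotone_subseq (f := fun n => (f n : G)) (fun n => (f n).2)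
  have hinj : Function.Injective fun n => (f (φ n) : G) :=
    Subtype.val_injective.comp (f.injective.comp φ.injective)
  have hstrict : StrictMono fun n => (f (φ n) : G) :=
    Monotone.strictMono_of_injective hφ hinj
  have hanti : StrictAnti fun n => ((f (φ n) : G))⁻¹ * g := by
    intro m n h
    exact mul_lt_mul_left (inv_lt_inv_iff.mpr (hstrict h)) g
  exact Set.isWF_iff_no_descending_seq.mp hT _ hanti fun n => (f (φ n)).2.2

omit [CovariantClass G G (Function.swap (· * ·)) (· < ·)] in
private theorem MN_one_le_prod {l : List G} (h : ∀ a ∈ l, 1 ≤ a) : 1 ≤ l.prod := by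
  haveI := covariantClass_le_of_lt G G (· * ·)
  induction l with
  | nil => simp
  | cons a t ih =>
    rw [List.prod_cons]
    exact one_le_mul (h a List.mem_cons_self) (ih fun b hb => h b (List.mem_cons_of_mem a hb))

private theorem MN_prod_le : ∀ {l1 l2 : List G}, List.SublistForall₂ (· ≤ ·) l1 l2 →
    (∀ a ∈ l2, 1 ≤ a) → l1.prod ≤ l2.prod := by
  haveI := covariantClass_le_of_lt G G (· * ·)
  haveI := covariantClass_le_of_lt G G (Function.swap (· * ·))
  intro l1 l2 h
  induction h with
  | nil => intro h2; rw [List.prod_nil]; exact MN_one_le_prod h2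
  | @cons a b t1 t2 hab h ih =>
    intro h2
    rw [List.prod_cons, List.prod_cons]
    exact mul_le_mul' hab (ih fun c hc => h2 c (List.mem_cons_of_mem _ hc))
  | @cons_right b t1 t2 h ih =>
    intro h2
    rw [List.prod_cons]
    exact (ih fun c hc => h2 c (List.mem_cons_of_mem _ hc)).trans
      (le_mul_of_one_le_left' (h2 b List.mem_cons_self))

/-- Neumann's lemma (well-orderedness part): the submonoid generated by a well-ordered
set of elements `> 1` is well-ordered. -/
private theorem MN_isWF_closure {S : Set G} (hS : S.IsWF) (hpos : ∀ s ∈ S, 1 < s) :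
    (Submonoid.closure S : Set G).IsWF := by
  have hpwo : (Submonoid.closure S : Set G).IsPWO := by
    rw [Submonoid.closure_eq_image_prod]
    exact (Set.PartiallyWellOrderedOn.partiallyWellOrderedOn_sublistForall₂
        (· ≤ ·) hS.isPWO).image_of_monotone_on
      fun l1 hl1 l2 hl2 h12 => MN_prod_le h12 fun a ha => (hpos a (hl2 a ha)).le
  exact hpwo.isWF

end Aux

/-- In the Malcev–Neumann ring, `1 - x` is invertible whenever the support of
`x` lies in the positive cone, with inverse `∑ₙ xⁿ`. -/
theorem malcevNeumann_one_sub_invertible {K G : Type*} [DivisionRing K]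
    [Group G] [LinearOrder G] [CovariantClass G G (· * ·) (· < ·)]
    [CovariantClass G G (Function.swap (· * ·)) (· < ·)]
    (inst : Ring (MNSeries K G))
    (hadd : ∀ f g : MNSeries K G, ∀ x : G, (f + g).val x = f.val x + g.val x)
    (hmul : ∀ f g : MNSeries K G, ∀ x : G,
      (f * g).val x = ∑ᶠ h : G, f.val h * g.val (h⁻¹ * x))
    (hone : (1 : MNSeries K G).val = fun x : G => if x = 1 then 1 else 0)
    (x : MNSeries K G) (hx : ∀ g : G, x.val g ≠ 0 → 1 < g) :
    ∃ y : MNSeries K G,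
      (∀ g : G, y.val g = ∑ᶠ n : ℕ, (x ^ n).val g) ∧
      (1 - x) * y = 1 ∧ y * (1 - x) = 1 := by
  classical
  -- basic coefficient lemmas for 0, neg, sub
  have hzero : ∀ g : G, (0 : MNSeries K G).val g = 0 := by
    intro g
    have h := hadd 0 0 g
    rw [add_zero] at h
    exact left_eq_add.mp h
  have hneg : ∀ (f : MNSeries K G) (g : G), (-f).val g = -(f.val g) := by
    intro f g
    have h := hadd f (-f) g
    rw [add_neg_cancel, hzero] at h
    exact eq_neg_of_add_eq_zero_right h.symm
  have hsub : ∀ (f h : MNSeries K G) (g : G), (f - h).val g = f.val g - h.val g := by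
    intro f h g
    rw [sub_eq_add_neg, hadd, hneg, sub_eq_add_neg]
  -- support sets
  set S : Set G := Function.support x.val with hSdef
  have hSwf : S.IsWF := x.2
  have hSpos : ∀ s ∈ S, 1 < s := fun s hs => hx s hs
  set U : Set G := (Submonoid.closure S : Set G) with hUdef
  have hUwf : U.IsWF := MN_isWF_closure hSwf hSpos
  -- extracting a nonzero term from a nonzero product coefficient
  have hex : ∀ (f h : MNSeries K G) (g : G), (f * h).val g ≠ 0 →
      ∃ a : G, f.val a ≠ 0 ∧ h.val (a⁻¹ * g) ≠ 0 := by
    intro f h g hg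
    rw [hmul] at hg
    by_contra hc
    push_neg at hc
    apply hg
    apply finsum_eq_zero_of_forall_eq_zero
    intro a
    rcases eq_or_ne (f.val a) 0 with h0 | h0
    · rw [h0, zero_mul]
    · rw [hc a h0, mul_zero]
  -- supports of powers lie in the closure U
  have hpow : ∀ (n : ℕ) (g : G), (x ^ n).val g ≠ 0 → g ∈ U := by
    intro n
    induction n with
    | zero =>
      intro g hg
      rw [pow_zero, hone] at hg
      simp only at hg
      by_cases hg1 : g = 1
      · rw [hg1]; exact one_mem _
      · rw [if_neg hg1] at hg; exact absurd rfl hg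
    | succ n ih =>
      intro g hg
      rw [pow_succ'] at hg
      obtain ⟨a, ha, ha'⟩ := hex x (x ^ n) g hg
      have hmem : a * (a⁻¹ * g) ∈ U :=
        mul_mem (Submonoid.subset_closure ha) (ih _ ha')
      rwa [mul_inv_cancel_left] at hmem
  -- finiteness of the co-support : each g is in the support of only finitely many xⁿ
  have hcofin : ∀ g : G, {n : ℕ | (x ^ n).val g ≠ 0}.Finite := by
    have main : ∀ g ∈ U, {n : ℕ | (x ^ n).val g ≠ 0}.Finite := by
      intro g hg
      refine Set.WellFoundedOn.induction (P := fun g : G => {n : ℕ | (x ^ n).val g ≠ 0}.Finite)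
        (hUwf : U.WellFoundedOn (· < ·)) hg ?_
      intro y hy ih
      have hA : {s | s ∈ S ∧ s⁻¹ * y ∈ U}.Finite := MN_aux_finite hSwf hUwf y
      have hfin : (⋃ s ∈ {s | s ∈ S ∧ s⁻¹ * y ∈ U},
          Nat.succ '' {m : ℕ | (x ^ m).val (s⁻¹ * y) ≠ 0}).Finite := by
        refine hA.biUnion ?_
        intro s hs
        refine Set.Finite.image _ (ih (s⁻¹ * y) hs.2 ?_)
        have h1s : 1 < s := hSpos s hs.1
        have : s⁻¹ * y < 1 * y := mul_lt_mul_left (inv_lt_one_iff_one_lt.mpr h1s) y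
        rwa [one_mul] at this
      refine (hfin.union (Set.finite_singleton 0)).subset ?_
      rintro (_ | m) hm
      · exact Set.mem_union_right _ rfl
      · refine Set.mem_union_left _ ?_
        rw [Set.mem_setOf_eq, pow_succ'] at hm
        obtain ⟨a, ha, ha'⟩ := hex x (x ^ m) y hm
        have haU : a⁻¹ * y ∈ U := hpow m _ ha'
        exact Set.mem_biUnion ⟨ha, haU⟩ ⟨m, ha', rfl⟩
    intro g
    by_cases hg : g ∈ U
    · exact main g hg
    · refine Set.Finite.subset Set.finite_empty ?_
      intro n hn
      exact absurd (hpow n g hn) hg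
  -- construction of y
  set yv : G → K := fun g => ∑ᶠ n : ℕ, (x ^ n).val g with hyvdef
  have hysupp : Function.support yv ⊆ U := by
    intro g hg
    rw [Function.mem_support] at hg
    have hex0 : ∃ n : ℕ, (x ^ n).val g ≠ 0 := by
      by_contra h
      push_neg at h
      exact hg (finsum_eq_zero_of_forall_eq_zero h)
    obtain ⟨n, hn⟩ := hex0
    exact hpow n g hn
  set y : MNSeries K G := ⟨yv, hUwf.mono hysupp⟩ with hydef
  have hyval : ∀ g, y.val g = ∑ᶠ n : ℕ, (x ^ n).val g := fun g => rfl
  -- coefficients of x * y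
  have hxy : ∀ g : G, (x * y).val g = ∑ᶠ n : ℕ, (x ^ (n + 1)).val g := by
    intro g
    have hH : {h | h ∈ S ∧ h⁻¹ * g ∈ U}.Finite := MN_aux_finite hSwf hUwf g
    set Hf : Finset G := hH.toFinset with hHfdef
    have hmemH : ∀ {h : G}, h ∈ Hf ↔ h ∈ S ∧ h⁻¹ * g ∈ U := fun {h} => hH.mem_toFinset
    have hN : (⋃ h ∈ {h | h ∈ S ∧ h⁻¹ * g ∈ U},
        {n : ℕ | (x ^ n).val (h⁻¹ * g) ≠ 0}).Finite :=
      hH.biUnion fun h _ => hcofin _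
    set Nf : Finset ℕ := hN.toFinset with hNfdef
    have step1 : (x * y).val g = ∑ h ∈ Hf, x.val h * yv (h⁻¹ * g) := by
      rw [hmul]
      refine finsum_eq_finset_sum_of_support_subset _ ?_
      intro h hh
      rw [Function.mem_support] at hh
      have h1 : x.val h ≠ 0 := fun h0 => hh (by rw [h0, zero_mul])
      have h2 : yv (h⁻¹ * g) ≠ 0 := fun h0 => hh (by
        show x.val h * y.val (h⁻¹ * g) = 0
        rw [show y.val (h⁻¹ * g) = yv (h⁻¹ * g) from rfl, h0, mul_zero])
      exact Finset.mem_coe.mpr (hmemH.mpr ⟨h1, hysupp h2⟩)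
    have step2 : ∀ h ∈ Hf, yv (h⁻¹ * g) = ∑ n ∈ Nf, (x ^ n).val (h⁻¹ * g) := by
      intro h hh
      refine finsum_eq_finset_sum_of_support_subset _ ?_
      intro n hn
      rw [Function.mem_support] at hn
      rw [Finset.mem_coe, hNfdef, hN.mem_toFinset]
      exact Set.mem_biUnion (hmemH.mp hh) hn
    have step3 : ∀ n : ℕ, (x ^ (n + 1)).val g = ∑ h ∈ Hf, x.val h * (x ^ n).val (h⁻¹ * g) := by
      intro n
      rw [pow_succ', hmul]
      refine finsum_eq_finset_sum_of_support_subset _ ?_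
      intro h hh
      rw [Function.mem_support] at hh
      have h1 : x.val h ≠ 0 := fun h0 => hh (by rw [h0, zero_mul])
      have h2 : (x ^ n).val (h⁻¹ * g) ≠ 0 := fun h0 => hh (by rw [h0, mul_zero])
      exact Finset.mem_coe.mpr (hmemH.mpr ⟨h1, hpow n _ h2⟩)
    have step4 : ∑ᶠ n : ℕ, (x ^ (n + 1)).val g = ∑ n ∈ Nf, (x ^ (n + 1)).val g := by
      refine finsum_eq_finset_sum_of_support_subset _ ?_
      intro n hn
      rw [Function.mem_support, pow_succ'] at hn
      obtain ⟨a, ha, ha'⟩ := hex x (x ^ n) g hn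
      rw [Finset.mem_coe, hNfdef, hN.mem_toFinset]
      exact Set.mem_biUnion (⟨ha, hpow n _ ha'⟩ : a ∈ {h | h ∈ S ∧ h⁻¹ * g ∈ U}) ha'
    calc (x * y).val g = ∑ h ∈ Hf, x.val h * yv (h⁻¹ * g) := step1
      _ = ∑ h ∈ Hf, ∑ n ∈ Nf, x.val h * (x ^ n).val (h⁻¹ * g) := by
          refine Finset.sum_congr rfl fun h hh => ?_
          rw [step2 h hh, Finset.mul_sum]
      _ = ∑ n ∈ Nf, ∑ h ∈ Hf, x.val h * (x ^ n).val (h⁻¹ * g) := Finset.sum_comm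
      _ = ∑ n ∈ Nf, (x ^ (n + 1)).val g :=
          Finset.sum_congr rfl fun n _ => (step3 n).symm
      _ = ∑ᶠ n : ℕ, (x ^ (n + 1)).val g := step4.symm
  -- coefficients of y * x
  have hyx : ∀ g : G, (y * x).val g = ∑ᶠ n : ℕ, (x ^ (n + 1)).val g := by
    intro g
    have hH : {h | h ∈ U ∧ h⁻¹ * g ∈ S}.Finite := MN_aux_finite hUwf hSwf g
    set Hf : Finset G := hH.toFinset with hHfdef
    have hmemH : ∀ {h : G}, h ∈ Hf ↔ h ∈ U ∧ h⁻¹ * g ∈ S := fun {h} => hH.mem_toFinset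
    have hN : (⋃ h ∈ {h | h ∈ U ∧ h⁻¹ * g ∈ S},
        {n : ℕ | (x ^ n).val h ≠ 0}).Finite :=
      hH.biUnion fun h _ => hcofin _
    set Nf : Finset ℕ := hN.toFinset with hNfdef
    have step1 : (y * x).val g = ∑ h ∈ Hf, yv h * x.val (h⁻¹ * g) := by
      rw [hmul]
      refine finsum_eq_finset_sum_of_support_subset _ ?_
      intro h hh
      rw [Function.mem_support] at hh
      have h1 : yv h ≠ 0 := fun h0 => hh (by
        show y.val h * x.val (h⁻¹ * g) = 0
        rw [show y.val h = yv h from rfl, h0, zero_mul])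
      have h2 : x.val (h⁻¹ * g) ≠ 0 := fun h0 => hh (by rw [h0, mul_zero])
      exact Finset.mem_coe.mpr (hmemH.mpr ⟨hysupp h1, h2⟩)
    have step2 : ∀ h ∈ Hf, yv h = ∑ n ∈ Nf, (x ^ n).val h := by
      intro h hh
      refine finsum_eq_finset_sum_of_support_subset _ ?_
      intro n hn
      rw [Function.mem_support] at hn
      rw [Finset.mem_coe, hNfdef, hN.mem_toFinset]
      exact Set.mem_biUnion (hmemH.mp hh) hn
    have step3 : ∀ n : ℕ, (x ^ (n + 1)).val g = ∑ h ∈ Hf, (x ^ n).val h * x.val (h⁻¹ * g) := by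
      intro n
      rw [pow_succ, hmul]
      refine finsum_eq_finset_sum_of_support_subset _ ?_
      intro h hh
      rw [Function.mem_support] at hh
      have h1 : (x ^ n).val h ≠ 0 := fun h0 => hh (by rw [h0, zero_mul])
      have h2 : x.val (h⁻¹ * g) ≠ 0 := fun h0 => hh (by rw [h0, mul_zero])
      exact Finset.mem_coe.mpr (hmemH.mpr ⟨hpow n _ h1, h2⟩)
    have step4 : ∑ᶠ n : ℕ, (x ^ (n + 1)).val g = ∑ n ∈ Nf, (x ^ (n + 1)).val g := by
      refine finsum_eq_finset_sum_of_support_subset _ ?_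
      intro n hn
      rw [Function.mem_support, pow_succ] at hn
      obtain ⟨a, ha, ha'⟩ := hex (x ^ n) x g hn
      rw [Finset.mem_coe, hNfdef, hN.mem_toFinset]
      exact Set.mem_biUnion (⟨hpow n _ ha, ha'⟩ : a ∈ {h | h ∈ U ∧ h⁻¹ * g ∈ S}) ha
    calc (y * x).val g = ∑ h ∈ Hf, yv h * x.val (h⁻¹ * g) := step1
      _ = ∑ h ∈ Hf, ∑ n ∈ Nf, (x ^ n).val h * x.val (h⁻¹ * g) := by
          refine Finset.sum_congr rfl fun h hh => ?_
          rw [step2 h hh, Finset.sum_mul]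
      _ = ∑ n ∈ Nf, ∑ h ∈ Hf, (x ^ n).val h * x.val (h⁻¹ * g) := Finset.sum_comm
      _ = ∑ n ∈ Nf, (x ^ (n + 1)).val g :=
          Finset.sum_congr rfl fun n _ => (step3 n).symm
      _ = ∑ᶠ n : ℕ, (x ^ (n + 1)).val g := step4.symm
  -- telescoping
  have htel : ∀ g : G,
      (∑ᶠ n : ℕ, (x ^ n).val g) - (∑ᶠ n : ℕ, (x ^ (n + 1)).val g) = (1 : MNSeries K G).val g := by
    intro g
    have hc := hcofin g
    set N : ℕ := hc.toFinset.sup id + 1 with hNdef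
    have hsupN : ∀ n : ℕ, (x ^ n).val g ≠ 0 → n < N := by
      intro n hn
      have hmem : n ∈ hc.toFinset := hc.mem_toFinset.mpr hn
      exact Nat.lt_succ_of_le (Finset.le_sup (f := id) hmem)
    have e1 : ∑ᶠ n : ℕ, (x ^ n).val g = ∑ n ∈ Finset.range (N + 1), (x ^ n).val g := by
      refine finsum_eq_finset_sum_of_support_subset _ ?_
      intro n hn
      rw [Finset.coe_range, Set.mem_Iio]
      exact (hsupN n hn).trans (Nat.lt_succ_self N)
    have e2 : ∑ᶠ n : ℕ, (x ^ (n + 1)).val g = ∑ n ∈ Finset.range N, (x ^ (n + 1)).val g := by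
      refine finsum_eq_finset_sum_of_support_subset _ ?_
      intro n hn
      rw [Finset.coe_range, Set.mem_Iio]
      exact Nat.lt_of_succ_lt (hsupN (n + 1) hn)
    rw [e1, e2, Finset.sum_range_succ', pow_zero, add_sub_cancel_left]
  refine ⟨y, hyval, ?_, ?_⟩
  · have h1 : (1 - x) * y = y - x * y := by rw [sub_mul, one_mul]
    rw [h1]
    apply Subtype.ext
    funext g
    rw [hsub y (x * y) g, hyval g, hxy g]
    exact htel g
  · have h1 : y * (1 - x) = y - y * x := by rw [mul_sub, mul_one]
    rw [h1]
    apply Subtype.ext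
    funext g
    rw [hsub y (y * x) g, hyval g, hyx g]
    exact htel g
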